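/- arXiv:2602.21182 — 2 statements merged into one kernel-verified Lean document; each statement's English description precedes it below -/
import Mathlib

section
/- If a connected graph G contains k pairwise edge-disjoint spanning trees and each edge of G fails independently with probability at most p, then the probability that G becomes disconnected is at most C(|E|, k) · p^k, and in particular at most |E|^k · p^k. -/
open scoped Classical

set_option maxHeartbeats 1000000

/-- Bernoulli product weight of an outcome `ω` (true = edge failed). -/
noncomputable def W {α : Type*} [Fintype α] (pe : α → ℝ) (ω : α → Bool) : ℝ :=
  ∏ e, (if ω e then pe e else 1 - pe e)

lemma sum_prod_bool {α : Type*} [DecidableEq α] [Fintype α] (g : α → Bool → ℝ) :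
    ∑ ω : α → Bool, ∏ e, g e (ω e) = ∏ e, (g e true + g e false) := by
  classical
  have h := Finset.prod_univ_sum (fun _ : α => (Finset.univ : Finset Bool)) g
  rw [Fintype.piFinset_univ] at h
  rw [← h]
  exact Finset.prod_congr rfl fun e _ => by simp

lemma prob_bound {α : Type*} [DecidableEq α] [Fintype α] (k : ℕ) (p : ℝ) (pe : α → ℝ)
    (hp0 : ∀ e, 0 ≤ pe e) (hpe : ∀ e, pe e ≤ p) (hp1 : p ≤ 1)
    (Q : (α → Bool) → Prop)
    (hQ : ∀ ω, Q ω → k ≤ (Finset.univ.filter fun e => ω e = true).card) :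
    (∑ ω : α → Bool, if Q ω then W pe ω else 0)
      ≤ (Nat.choose (Fintype.card α) k : ℝ) * p ^ k := by
  classical
  have hW0 : ∀ ω, 0 ≤ W pe ω := by
    intro ω
    apply Finset.prod_nonneg
    intro e _
    rcases Bool.eq_false_or_eq_true (ω e) with h | h <;> simp [h] <;>
      linarith [hpe e, hp0 e]
  -- sum over outcomes where all edges of `S` failed
  have hSsum : ∀ S : Finset α,
      (∑ ω : α → Bool,
          if S ⊆ Finset.univ.filter (fun e => ω e = true) then W pe ω else 0)
        = ∏ e ∈ S, pe e := by
    intro S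
    set g : α → Bool → ℝ := fun e b => if e ∈ S then (if b then pe e else 0)
      else (if b then pe e else 1 - pe e) with hg
    have hrw : ∀ ω : α → Bool,
        (if S ⊆ Finset.univ.filter (fun e => ω e = true) then W pe ω else 0)
          = ∏ e, g e (ω e) := by
      intro ω
      simp only [hg]
      by_cases hS : S ⊆ Finset.univ.filter (fun e => ω e = true)
      · rw [if_pos hS]
        unfold W
        refine Finset.prod_congr rfl fun e _ => ?_
        by_cases he : e ∈ S
        · have ht : ω e = true := (Finset.mem_filter.mp (hS he)).2
          simp [he, ht]
        · simp [he]
      · rw [if_neg hS]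
        obtain ⟨e, heS, hnot⟩ := Finset.not_subset.mp hS
        have hf : ω e = false := by
          simp only [Finset.mem_filter, Finset.mem_univ, true_and] at hnot
          exact Bool.not_eq_true _ |>.mp hnot
        symm
        apply Finset.prod_eq_zero (Finset.mem_univ e)
        simp [heS, hf]
    have hsum : ∀ e, g e true + g e false = if e ∈ S then pe e else 1 := by
      intro e
      simp only [hg]
      by_cases he : e ∈ S <;> simp [he] <;> ring
    calc (∑ ω : α → Bool,
          if S ⊆ Finset.univ.filter (fun e => ω e = true) then W pe ω else 0)
        = ∑ ω : α → Bool, ∏ e, g e (ω e) := Finset.sum_congr rfl fun ω _ => hrw ω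
      _ = ∏ e, (g e true + g e false) := sum_prod_bool g
      _ = ∏ e, (if e ∈ S then pe e else 1) := Finset.prod_congr rfl fun e _ => hsum e
      _ = ∏ e ∈ S, pe e := by rw [Finset.prod_ite_mem, Finset.univ_inter]
  -- choose a `k`-subset of the failed set
  have hex : ∀ ω : α → Bool,
      k ≤ (Finset.univ.filter fun e => ω e = true).card →
      ∃ S, S ⊆ (Finset.univ.filter fun e => ω e = true) ∧ S.card = k :=
    fun ω h => Finset.exists_subset_card_eq h
  choose! sel hsel1 hsel2 using hex
  calc
    (∑ ω : α → Bool, if Q ω then W pe ω else 0)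
        ≤ ∑ ω : α → Bool,
            (if k ≤ (Finset.univ.filter fun e => ω e = true).card then W pe ω else 0) := by
          apply Finset.sum_le_sum
          intro ω _
          by_cases hq : Q ω
          · rw [if_pos hq, if_pos (hQ ω hq)]
          · rw [if_neg hq]
            by_cases h2 : k ≤ (Finset.univ.filter fun e => ω e = true).card
            · rw [if_pos h2]; exact hW0 ω
            · rw [if_neg h2]
    _ = ∑ ω ∈ Finset.univ.filter
          (fun ω : α → Bool => k ≤ (Finset.univ.filter fun e => ω e = true).card), W pe ω := by
          rw [Finset.sum_filter]
    _ = ∑ S ∈ Finset.powersetCard k (Finset.univ : Finset α),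
          ∑ ω ∈ (Finset.univ.filter
              (fun ω : α → Bool =>
                k ≤ (Finset.univ.filter fun e => ω e = true).card)).filter
            (fun ω => sel ω = S), W pe ω := by
          rw [Finset.sum_fiberwise_of_maps_to]
          intro ω hω
          rw [Finset.mem_filter] at hω
          exact Finset.mem_powersetCard.mpr
            ⟨Finset.subset_univ _, hsel2 ω hω.2⟩
    _ ≤ ∑ S ∈ Finset.powersetCard k (Finset.univ : Finset α),
          ∑ ω : α → Bool,
            (if S ⊆ Finset.univ.filter (fun e => ω e = true) then W pe ω else 0) := by
          apply Finset.sum_le_sum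
          intro S _
          rw [← Finset.sum_filter]
          apply Finset.sum_le_sum_of_subset_of_nonneg
          · intro ω hω
            simp only [Finset.mem_filter, Finset.mem_univ, true_and] at hω ⊢
            obtain ⟨hk, hsS⟩ := hω
            exact hsS ▸ hsel1 ω hk
          · intro ω _ _
            exact hW0 ω
    _ = ∑ S ∈ Finset.powersetCard k (Finset.univ : Finset α), ∏ e ∈ S, pe e :=
          Finset.sum_congr rfl fun S _ => hSsum S
    _ ≤ ∑ S ∈ Finset.powersetCard k (Finset.univ : Finset α), p ^ k := by
          apply Finset.sum_le_sum
          intro S hS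
          obtain ⟨-, hcard⟩ := Finset.mem_powersetCard.mp hS
          calc ∏ e ∈ S, pe e ≤ ∏ e ∈ S, p :=
                Finset.prod_le_prod (fun e _ => hp0 e) (fun e _ => hpe e)
            _ = p ^ k := by rw [Finset.prod_const, hcard]
    _ = (Nat.choose (Fintype.card α) k : ℝ) * p ^ k := by
          rw [Finset.sum_const, Finset.card_powersetCard, Finset.card_univ, nsmul_eq_mul]

/-- If a connected graph `G` contains `k` edge-disjoint spanning trees and each edge fails
independently with probability at most `p`, then the probability that the surviving graph
is disconnected is at most `C(|E|,k) · p^k`, and in particular at most `|E|^k · p^k`. -/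
theorem stmt_2 {V : Type*} [Fintype V] [DecidableEq V] (G : SimpleGraph V) (hG : G.Connected)
    (k : ℕ) (T : Fin k → G.Subgraph)
    (hT : ∀ i, (T i).IsSpanning ∧ (T i).spanningCoe.IsTree)
    (hdisj : Pairwise fun i j => Disjoint (T i).edgeSet (T j).edgeSet)
    (p : ℝ) (pe : G.edgeSet → ℝ)
    (hp0 : ∀ e, 0 ≤ pe e) (hpe : ∀ e, pe e ≤ p) (hp1 : p ≤ 1) :
    (∑ ω : G.edgeSet → Bool,
        if ¬ (G.deleteEdges {s : Sym2 V | ∃ h : s ∈ G.edgeSet, ω ⟨s, h⟩ = true}).Connected then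
          ∏ e : G.edgeSet, (if ω e then pe e else 1 - pe e)
        else 0)
      ≤ (Nat.choose (Nat.card G.edgeSet) k : ℝ) * p ^ k ∧
    (∑ ω : G.edgeSet → Bool,
        if ¬ (G.deleteEdges {s : Sym2 V | ∃ h : s ∈ G.edgeSet, ω ⟨s, h⟩ = true}).Connected then
          ∏ e : G.edgeSet, (if ω e then pe e else 1 - pe e)
        else 0)
      ≤ (Nat.card G.edgeSet : ℝ) ^ k * p ^ k := by
  classical
  -- graph-theoretic key: a disconnecting failure set has at least `k` failed edges
  have key : ∀ ω : G.edgeSet → Bool,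
      ¬ (G.deleteEdges {s : Sym2 V | ∃ h : s ∈ G.edgeSet, ω ⟨s, h⟩ = true}).Connected →
      k ≤ (Finset.univ.filter fun e : G.edgeSet => ω e = true).card := by
    intro ω hnc
    have hf : ∀ i : Fin k, ∃ e : G.edgeSet, (e : Sym2 V) ∈ (T i).edgeSet ∧ ω e = true := by
      intro i
      by_contra hcon
      push_neg at hcon
      apply hnc
      have hle : (T i).spanningCoe ≤
          G.deleteEdges {s : Sym2 V | ∃ h : s ∈ G.edgeSet, ω ⟨s, h⟩ = true} := by
        intro v u hadj
        have hadj' : (T i).Adj v u := hadj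
        rw [SimpleGraph.deleteEdges_adj]
        refine ⟨(T i).adj_sub hadj', ?_⟩
        rintro ⟨hmem, htrue⟩
        exact hcon ⟨s(v, u), hmem⟩ (SimpleGraph.Subgraph.mem_edgeSet.mpr hadj') htrue
      exact SimpleGraph.Connected.mono hle (hT i).2.isConnected
    choose f hf1 hf2 using hf
    have hinj : Function.Injective f := by
      intro i j hij
      by_contra hne
      exact Set.disjoint_left.mp (hdisj hne) (hf1 i) (hij ▸ hf1 j)
    calc k = (Finset.univ : Finset (Fin k)).card := by simp
      _ ≤ (Finset.univ.filter fun e : G.edgeSet => ω e = true).card :=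
          Finset.card_le_card_of_injOn f
            (fun i _ => Finset.mem_filter.mpr ⟨Finset.mem_univ _, hf2 i⟩) hinj.injOn
  have h1 := prob_bound k p pe hp0 hpe hp1
    (fun ω => ¬ (G.deleteEdges {s : Sym2 V | ∃ h : s ∈ G.edgeSet, ω ⟨s, h⟩ = true}).Connected)
    key
  simp only [W] at h1
  replace h1 : (∑ ω : G.edgeSet → Bool,
      if ¬ (G.deleteEdges {s : Sym2 V | ∃ h : s ∈ G.edgeSet, ω ⟨s, h⟩ = true}).Connected then
        ∏ e : G.edgeSet, (if ω e then pe e else 1 - pe e)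
      else 0) ≤ ((Fintype.card G.edgeSet).choose k : ℝ) * p ^ k := by
    convert h1
  rw [Nat.card_eq_fintype_card]
  refine ⟨h1, ?_⟩
  have hL0 : 0 ≤ (∑ ω : G.edgeSet → Bool,
      if ¬ (G.deleteEdges {s : Sym2 V | ∃ h : s ∈ G.edgeSet, ω ⟨s, h⟩ = true}).Connected then
        ∏ e : G.edgeSet, (if ω e then pe e else 1 - pe e)
      else 0) := by
    apply Finset.sum_nonneg
    intro ω _
    by_cases hq : ¬ (G.deleteEdges
        {s : Sym2 V | ∃ h : s ∈ G.edgeSet, ω ⟨s, h⟩ = true}).Connected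
    · rw [if_pos hq]
      apply Finset.prod_nonneg
      intro e _
      rcases Bool.eq_false_or_eq_true (ω e) with h | h <;> simp [h] <;>
        linarith [hpe e, hp0 e]
    · rw [if_neg hq]
  rcases Nat.eq_zero_or_pos k with hk | hk
  · subst hk
    simpa using h1
  · by_cases hm : Fintype.card G.edgeSet = 0
    · rw [hm] at h1 ⊢
      rw [Nat.choose_eq_zero_of_lt hk] at h1
      simp only [Nat.cast_zero, zero_mul] at h1
      rw [Nat.cast_zero, zero_pow hk.ne', zero_mul]
      exact h1
    · obtain ⟨e⟩ := Fintype.card_pos_iff.mp (Nat.pos_of_ne_zero hm)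
      have hp : 0 ≤ p := (hp0 e).trans (hpe e)
      have hchoose : ((Fintype.card G.edgeSet).choose k : ℝ)
          ≤ (Fintype.card G.edgeSet : ℝ) ^ k := by
        have : (Fintype.card G.edgeSet).choose k ≤ Fintype.card G.edgeSet ^ k := by
          rw [Nat.choose_eq_descFactorial_div_factorial]
          exact (Nat.div_le_self _ _).trans (Nat.descFactorial_le_pow _ _)
        exact_mod_cast this
      calc _ ≤ ((Fintype.card G.edgeSet).choose k : ℝ) * p ^ k := h1
        _ ≤ (Fintype.card G.edgeSet : ℝ) ^ k * p ^ k :=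
            mul_le_mul_of_nonneg_right hchoose (pow_nonneg hp k)
end

section
/- Kirchhoff's Matrix–Tree theorem: for a finite connected graph G, the number of spanning trees τ(G) equals the determinant of the matrix obtained from the Laplacian L = D − A by deleting any one row i and the corresponding column i, and this value is independent of the choice of i. -/
set_option linter.unusedSectionVars false
set_option linter.unusedVariables false
set_option maxHeartbeats 1000000
open SimpleGraph Finset Matrix

namespace Kirchhoff


variable {V : Type*} [Fintype V] [DecidableEq V]

noncomputable def ord (v : V) : ℕ := (Fintype.equivFin V v : ℕ)

lemma ord_injective : Function.Injective (ord (V := V)) := by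
  intro a b h
  exact (Fintype.equivFin V).injective (Fin.val_injective h)

variable (G : SimpleGraph V) [DecidableRel G.Adj]

abbrev KE : Type _ := {p : V × V // G.Adj p.1 p.2 ∧ ord p.1 < ord p.2}

noncomputable instance : Fintype (KE G) := Subtype.fintype _

instance : DecidableEq (KE G) := Subtype.instDecidableEq

def inc : Matrix V (KE G) ℝ := fun v e =>
  if v = e.1.1 then 1 else if v = e.1.2 then -1 else 0

variable {G}

lemma KE.ne (e : KE G) : e.1.1 ≠ e.1.2 := e.2.1.ne

lemma inc_apply_of_ne (e : KE G) {v : V} (h1 : v ≠ e.1.1) (h2 : v ≠ e.1.2) :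
    inc G v e = 0 := by simp [inc, h1, h2]

lemma inc_fst (e : KE G) : inc G e.1.1 e = 1 := by simp [inc]

lemma inc_snd (e : KE G) : inc G e.1.2 e = -1 := by
  simp [inc, (KE.ne e).symm]

lemma diag_sum (u : V) :
    ∑ e : KE G, inc G u e * inc G u e = (G.degree u : ℝ) := by
  have h1 : ∀ e : KE G, inc G u e * inc G u e
      = if u = e.1.1 ∨ u = e.1.2 then (1:ℝ) else 0 := by
    intro e
    by_cases h1 : u = e.1.1
    · subst h1; simp [inc_fst]
    · by_cases h2 : u = e.1.2
      · subst h2; simp [inc_snd, h1]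
      · simp [inc_apply_of_ne e h1 h2, h1, h2]
  rw [Finset.sum_congr rfl (fun e _ => h1 e), Finset.sum_boole]
  congr 1
  rw [← card_neighborFinset_eq_degree]
  refine Finset.card_bij' (fun e _ => if u = e.1.1 then e.1.2 else e.1.1)
    (fun v hv => if h : ord u < ord v then
        ⟨(u, v), (G.mem_neighborFinset u v).mp hv, h⟩
      else ⟨(v, u), ((G.mem_neighborFinset u v).mp hv).symm, by
        rcases lt_or_eq_of_le (not_lt.mp h) with h' | h'
        · exact h'
        · exact absurd (ord_injective h') (G.ne_of_adj ((G.mem_neighborFinset u v).mp hv)).symm⟩)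
    ?_ ?_ ?_ ?_
  · intro e he
    simp only [Finset.mem_filter] at he
    rcases he.2 with h | h
    · rw [if_pos h, G.mem_neighborFinset]
      rw [h]; exact e.2.1
    · have hne : u ≠ e.1.1 := fun hh => (KE.ne e) (hh ▸ h)
      rw [if_neg hne, G.mem_neighborFinset, h]
      exact e.2.1.symm
  · intro v hv
    by_cases h : ord u < ord v <;> simp [h]
  · intro e he
    simp only [Finset.mem_filter] at he
    have he2 := e.2.2
    have hab := KE.ne e
    rcases he.2 with h | h <;>
      apply Subtype.ext <;>
      split_ifs <;>
      first
        | exact Prod.ext_iff.mpr ⟨h, rfl⟩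
        | exact Prod.ext_iff.mpr ⟨rfl, h⟩
        | (exfalso; simp_all; omega)
        | (exfalso; simp_all)
  · intro v hv
    by_cases h : ord u < ord v <;> simp [h]

lemma offdiag_sum {u w : V} (huw : u ≠ w) :
    ∑ e : KE G, inc G u e * inc G w e = -(if G.Adj u w then (1:ℝ) else 0) := by
  have h1 : ∀ e : KE G, inc G u e * inc G w e
      = if e.1 = (u, w) ∨ e.1 = (w, u) then (-1:ℝ) else 0 := by
    intro e
    obtain ⟨⟨a, b⟩, hadj, hord⟩ := e
    have hab : a ≠ b := hadj.ne
    simp only [inc]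
    split_ifs <;> simp_all [Prod.ext_iff] <;> simp_all [eq_comm]
  rw [Finset.sum_congr rfl (fun e _ => h1 e)]
  by_cases hadj : G.Adj u w
  · rw [if_pos hadj]
    have hord : ord u ≠ ord w := fun hh => huw (ord_injective hh)
    set e₀ : KE G := if h : ord u < ord w then ⟨(u, w), hadj, h⟩
      else ⟨(w, u), hadj.symm, lt_of_le_of_ne (not_lt.mp h) (Ne.symm hord)⟩ with he₀
    rw [Finset.sum_eq_single e₀]
    · by_cases h : ord u < ord w <;> simp [he₀, h]
    · intro e _ hne
      rw [if_neg]
      rintro (h | h)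
      · apply hne
        have h2 : ord u < ord w := by
          have h3 := e.2.2; rw [h] at h3; exact h3
        rw [he₀, dif_pos h2]
        exact Subtype.ext h
      · apply hne
        have h2 : ¬ ord u < ord w := by
          have h3 := e.2.2; rw [h] at h3
          exact not_lt.mpr (le_of_lt h3)
        rw [he₀, dif_neg h2]
        exact Subtype.ext h
    · intro h
      exact absurd (Finset.mem_univ e₀) h
  · rw [if_neg hadj, neg_zero]
    apply Finset.sum_eq_zero
    intro e _
    rw [if_neg]
    rintro (h | h)
    · exact hadj (by rw [← show e.1.1 = u from congrArg Prod.fst h, ← show e.1.2 = w from congrArg Prod.snd h]; exact e.2.1)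
    · exact hadj (by rw [← show e.1.1 = w from congrArg Prod.fst h, ← show e.1.2 = u from congrArg Prod.snd h]; exact e.2.1.symm)

lemma lap_eq : G.lapMatrix ℝ = inc G * (inc G)ᵀ := by
  ext u w
  rw [Matrix.mul_apply]
  simp only [Matrix.transpose_apply]
  by_cases h : u = w
  · subst h
    rw [diag_sum]
    simp [lapMatrix, degMatrix, Matrix.sub_apply, Matrix.diagonal_apply_eq]
  · rw [offdiag_sum h]
    simp [lapMatrix, degMatrix, Matrix.sub_apply, Matrix.diagonal_apply_ne _ h, h]


section CB


variable {W E : Type*} [Fintype W] [DecidableEq W] [Fintype E] [DecidableEq E]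

local notation "ε" σ => ((Equiv.Perm.sign σ : ℤ) : ℝ)

lemma step1 (A : Matrix W E ℝ) (B : Matrix E W ℝ) :
    (A * B).det = ∑ p : W → E, (A.submatrix id p).det * ∏ i, B (p i) i := by
  have h1 : (A * B).det
      = ∑ p : W → E, ∑ σ : Equiv.Perm W, (ε σ) * ∏ i, A (σ i) (p i) * B (p i) i := by
    simp only [det_apply', mul_apply, prod_univ_sum, mul_sum, Fintype.piFinset_univ]
    rw [Finset.sum_comm]
  rw [h1]
  refine Finset.sum_congr rfl fun p _ => ?_
  rw [det_apply', Finset.sum_mul]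
  refine Finset.sum_congr rfl fun σ _ => ?_
  rw [Finset.prod_mul_distrib]
  simp only [submatrix_apply, id_eq]
  ring

lemma det_submatrix_zero_of_not_inj (A : Matrix W E ℝ) {p : W → E}
    (hp : ¬ Function.Injective p) : (A.submatrix id p).det = 0 := by
  rw [Function.not_injective_iff] at hp
  obtain ⟨i, j, hij, hne⟩ := hp
  exact Matrix.det_zero_of_column_eq hne (fun k => by simp [hij])

lemma step2 (A : Matrix W E ℝ) (B : Matrix E W ℝ) :
    (A * B).det = ∑ f : W ↪ E, (A.submatrix id ⇑f).det * ∏ i, B (f i) i := by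
  rw [step1]
  rw [← Finset.sum_filter_of_ne (p := fun p : W → E => Function.Injective p)
    (by intro p _ h; by_contra hinj
        exact h (by rw [det_submatrix_zero_of_not_inj A hinj, zero_mul]))]
  rw [Finset.sum_subtype (p := fun p : W → E => Function.Injective p)
    (univ.filter (fun p : W → E => Function.Injective p)) (by intro x; simp)]
  exact Fintype.sum_equiv (Equiv.subtypeInjectiveEquivEmbedding W E) _ _ (fun p => rfl)

lemma det_submatrix_comp_perm (A : Matrix W E ℝ) (f : W → E) (σ : Equiv.Perm W) :
    (A.submatrix id (f ∘ σ)).det = (ε σ) * (A.submatrix id f).det := by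
  have : A.submatrix id (f ∘ σ) = (A.submatrix id f).submatrix id σ := by
    rw [Matrix.submatrix_submatrix]; rfl
  rw [this, Matrix.det_permute']

/-- Cauchy–Binet, embedding form. -/
theorem cauchy_binet_emb (A : Matrix W E ℝ) (B : Matrix E W ℝ) :
    ((Fintype.card W).factorial : ℝ) * (A * B).det
      = ∑ f : W ↪ E, (A.submatrix id ⇑f).det * (B.submatrix ⇑f id).det := by
  have key : ∀ f : W ↪ E, (A.submatrix id ⇑f).det * (B.submatrix ⇑f id).det
      = ∑ σ : Equiv.Perm W,
          (A.submatrix id (⇑f ∘ σ)).det * ∏ i, B ((⇑f ∘ σ) i) i := by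
    intro f
    rw [det_apply' (B.submatrix ⇑f id), Finset.mul_sum]
    refine Finset.sum_congr rfl fun σ _ => ?_
    rw [det_submatrix_comp_perm]
    simp only [submatrix_apply, Function.comp_apply, id_eq]
    ring
  rw [Finset.sum_congr rfl (fun f _ => key f), Finset.sum_comm]
  have hswap : ∀ σ : Equiv.Perm W,
      (∑ f : W ↪ E, (A.submatrix id (⇑f ∘ σ)).det * ∏ i, B ((⇑f ∘ σ) i) i)
        = (A * B).det := by
    intro σ
    rw [step2]
    refine Fintype.sum_equiv (Equiv.embeddingCongr σ.symm (Equiv.refl E)) _ _ fun x => ?_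
    refine congrArg (fun p : W → E => (A.submatrix id p).det * ∏ i, B (p i) i) ?_
    funext y
    simp
  rw [Finset.sum_congr rfl (fun σ _ => hswap σ)]
  rw [Finset.sum_const, nsmul_eq_mul]
  congr 1
  norm_cast
  simp [Fintype.card_perm]


end CB
lemma inc_values (v : V) (e : KE G) :
    inc G v e = 0 ∨ inc G v e = 1 ∨ inc G v e = -1 := by
  unfold inc; split_ifs <;> simp

lemma endpoint_of_inc_ne_zero {v : V} {e : KE G} (h : inc G v e ≠ 0) :
    v = e.1.1 ∨ v = e.1.2 := by
  by_contra hc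
  push_neg at hc
  exact h (inc_apply_of_ne e hc.1 hc.2)

lemma inc_eq_sub (v : V) (e : KE G) :
    inc G v e = (if v = e.1.1 then 1 else 0) - (if v = e.1.2 then 1 else 0) := by
  have := KE.ne e
  unfold inc
  split_ifs <;> simp_all

lemma inc_col_sum (e : KE G) : ∑ v : V, inc G v e = 0 := by
  simp only [inc_eq_sub, Finset.sum_sub_distrib, Finset.sum_ite_eq', Finset.mem_univ]
  simp

lemma inc_tu (k : ℕ) (f : Fin k → V) (g : Fin k → KE G) (hf : Function.Injective f) :
    ((inc G).submatrix f g).det = 0 ∨ ((inc G).submatrix f g).det = 1 ∨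
      ((inc G).submatrix f g).det = -1 := by
  induction k with
  | zero => right; left; exact Matrix.det_fin_zero
  | succ k ih =>
    set M := (inc G).submatrix f g with hM
    by_cases hcase : ∃ j r, M r j ≠ 0 ∧ ∀ r', r' ≠ r → M r' j = 0
    · obtain ⟨j, r, hr0, huniq⟩ := hcase
      have hexp := Matrix.det_succ_column M j
      rw [Finset.sum_eq_single r] at hexp
      · have hsub : M.submatrix r.succAbove j.succAbove
            = (inc G).submatrix (f ∘ r.succAbove) (g ∘ j.succAbove) := by
          rw [hM, Matrix.submatrix_submatrix]
        have hf' : Function.Injective (f ∘ r.succAbove) :=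
          hf.comp (Fin.succAbove_right_injective)
        have ih' := ih (f ∘ r.succAbove) (g ∘ j.succAbove) hf'
        rw [← hsub] at ih'
        have hval : M r j = 1 ∨ M r j = -1 := by
          rcases inc_values (f r) (g j) with h | h | h
          · exact absurd h hr0
          · left; exact h
          · right; exact h
        have hsign : ((-1 : ℝ)) ^ ((r : ℕ) + (j : ℕ)) = 1 ∨
            ((-1 : ℝ)) ^ ((r : ℕ) + (j : ℕ)) = -1 := by
          rcases Nat.even_or_odd ((r : ℕ) + (j : ℕ)) with h | h
          · left; exact h.neg_one_pow
          · right; exact h.neg_one_pow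
        rw [hexp]
        rcases hsign with hs | hs <;> rcases hval with hv | hv <;>
          rcases ih' with hd | hd | hd <;> rw [hs, hv, hd] <;> norm_num
      · intro b _ hb
        rw [huniq b hb, mul_zero, zero_mul]
      · intro h
        exact absurd (Finset.mem_univ r) h
    · by_cases hzero : ∃ j, ∀ r, M r j = 0
      · obtain ⟨j, hj⟩ := hzero
        left
        exact Matrix.det_eq_zero_of_column_eq_zero j hj
      · push_neg at hcase hzero
        left
        rw [← Matrix.exists_vecMul_eq_zero_iff]
        refine ⟨1, ?_, ?_⟩
        · intro hc
          have := congrFun hc 0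
          simp at this
        · funext j
          obtain ⟨r1, hr1⟩ := hzero j
          obtain ⟨r2, hr2, hr2'⟩ := hcase j r1 hr1
          have hv1 : f r1 = (g j).1.1 ∨ f r1 = (g j).1.2 := endpoint_of_inc_ne_zero hr1
          have hv2 : f r2 = (g j).1.1 ∨ f r2 = (g j).1.2 := endpoint_of_inc_ne_zero hr2'
          have hne12 : f r2 ≠ f r1 := fun h => hr2 (hf h)
          have hends : ((g j).1.1 ∈ univ.image f) ∧ ((g j).1.2 ∈ univ.image f) := by
            constructor
            · rcases hv1 with h | h
              · exact Finset.mem_image.mpr ⟨r1, Finset.mem_univ _, h⟩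
              · rcases hv2 with h2 | h2
                · exact Finset.mem_image.mpr ⟨r2, Finset.mem_univ _, h2⟩
                · exact absurd (h2.trans h.symm) hne12
            · rcases hv1 with h | h
              · rcases hv2 with h2 | h2
                · exact absurd (h2.trans h.symm) hne12
                · exact Finset.mem_image.mpr ⟨r2, Finset.mem_univ _, h2⟩
              · exact Finset.mem_image.mpr ⟨r1, Finset.mem_univ _, h⟩
          have hsum : ∑ r, M r j = 0 := by
            have h1 : ∑ r, M r j = ∑ v ∈ univ.image f, inc G v (g j) := by
              rw [Finset.sum_image (fun a _ b _ h => hf h)]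
              rfl
            have h2 : ∑ v ∈ univ.image f, inc G v (g j) = ∑ v : V, inc G v (g j) := by
              apply Finset.sum_subset (Finset.subset_univ _)
              intro v _ hv
              refine inc_apply_of_ne (g j) ?_ ?_
              · rintro rfl; exact hv hends.1
              · rintro rfl; exact hv hends.2
            rw [h1, h2, inc_col_sum]
          simpa [Matrix.vecMul, dotProduct] using hsum


/-- the spanning subgraph of `G` determined by a finite set of directed edges. -/
def esub (G : SimpleGraph V) [DecidableRel G.Adj] (s : Finset (KE G)) : G.Subgraph where
  verts := Set.univ
  Adj u v := ∃ e ∈ s, e.1 = (u, v) ∨ e.1 = (v, u)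
  adj_sub := by
    rintro u v ⟨e, _, h | h⟩
    · have h1 : e.1.1 = u := congrArg Prod.fst h
      have h2 : e.1.2 = v := congrArg Prod.snd h
      rw [← h1, ← h2]; exact e.2.1
    · have h1 : e.1.1 = v := congrArg Prod.fst h
      have h2 : e.1.2 = u := congrArg Prod.snd h
      rw [← h1, ← h2]; exact e.2.1.symm
  edge_vert := fun _ => Set.mem_univ _
  symm := by
    constructor
    rintro u v ⟨e, he, h | h⟩
    · exact ⟨e, he, Or.inr h⟩
    · exact ⟨e, he, Or.inl h⟩

lemma esub_spanning (s : Finset (KE G)) : (esub G s).IsSpanning := fun _ => Set.mem_univ _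

lemma esub_adj {s : Finset (KE G)} {u v : V} :
    (esub G s).Adj u v ↔ ∃ e ∈ s, e.1 = (u, v) ∨ e.1 = (v, u) := Iff.rfl

/-- an edge of `esub G s` comes from a unique element of `s`. -/
lemma esub_mem_of_edge {s : Finset (KE G)} {e : KE G}
    (h : (esub G s).Adj e.1.1 e.1.2) : e ∈ s := by
  obtain ⟨e', he', hor⟩ := h
  rcases hor with h1 | h1
  · have : e' = e := Subtype.ext (by rw [h1])
    rwa [this] at he'
  · exfalso
    have ha : e'.1.1 = e.1.2 := congrArg Prod.fst h1
    have hb : e'.1.2 = e.1.1 := congrArg Prod.snd h1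
    have h2 := e'.2.2
    rw [ha, hb] at h2
    exact absurd e.2.2 (not_lt.mpr (le_of_lt h2))

section kernel

variable (i : V)

/-- key computation: pairing a vector (vanishing at the root `i`) against a column
of the incidence matrix. -/
lemma vec_pair_col (y' : V → ℝ) (e : KE G) :
    ∑ v : V, y' v * inc G v e = y' e.1.1 - y' e.1.2 := by
  simp only [inc_eq_sub, mul_sub, mul_ite, mul_one, mul_zero]
  rw [Finset.sum_sub_distrib]
  simp [Finset.sum_ite_eq', Finset.mem_univ]

lemma vecMul_apply_eq (y' : V → ℝ) (hyi : y' i = 0) (f : {j : V // j ≠ i} → KE G)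
    (x : {j : V // j ≠ i}) :
    Matrix.vecMul (fun w : {j : V // j ≠ i} => y' w.1)
        ((inc G).submatrix (fun a : {j : V // j ≠ i} => (a : V)) f) x
      = y' (f x).1.1 - y' (f x).1.2 := by
  rw [← vec_pair_col y' (f x)]
  have h1 : ∑ v ∈ univ.erase i, y' v * inc G v (f x)
      = ∑ w : {j : V // j ≠ i}, y' w.1 * inc G w.1 (f x) :=
    Finset.sum_subtype _ (by simp) _
  calc Matrix.vecMul (fun w : {j : V // j ≠ i} => y' w.1)
        ((inc G).submatrix (fun a : {j : V // j ≠ i} => (a : V)) f) x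
      = ∑ w : {j : V // j ≠ i}, y' w.1 * inc G w.1 (f x) := by
        rw [Matrix.vecMul, dotProduct]; rfl
    _ = ∑ v ∈ univ.erase i, y' v * inc G v (f x) := h1.symm
    _ = ∑ v : V, y' v * inc G v (f x) := by
        rw [Finset.sum_erase_eq_sub (Finset.mem_univ i), hyi, zero_mul, sub_zero]

end kernel

section kernel2

variable (i : V)

lemma walk_eq {H : SimpleGraph V} {y' : V → ℝ}
    (hadj : ∀ u v, H.Adj u v → y' u = y' v) {a b : V} (p : H.Walk a b) :
    y' a = y' b := by
  induction p with
  | nil => rfl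
  | cons h _ ih => exact (hadj _ _ h).trans ih

lemma esub_edge_eq {s : Finset (KE G)} {y' : V → ℝ}
    (hs : ∀ e ∈ s, y' e.1.1 = y' e.1.2) :
    ∀ u v, (esub G s).spanningCoe.Adj u v → y' u = y' v := by
  intro u v huv
  rw [Subgraph.spanningCoe_adj] at huv
  obtain ⟨e, he, h | h⟩ := huv
  · have h1 : e.1.1 = u := congrArg Prod.fst h
    have h2 : e.1.2 = v := congrArg Prod.snd h
    rw [← h1, ← h2]; exact hs e he
  · have h1 : e.1.1 = v := congrArg Prod.fst h
    have h2 : e.1.2 = u := congrArg Prod.snd h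
    rw [← h1, ← h2]; exact (hs e he).symm

lemma det_ne_zero_of_connected (f : {j : V // j ≠ i} → KE G)
    (hconn : ((esub G (univ.image f)).spanningCoe).Connected) :
    ((inc G).submatrix (fun a : {j : V // j ≠ i} => (a : V)) f).det ≠ 0 := by
  intro h0
  obtain ⟨y, hy, hvm⟩ := Matrix.exists_vecMul_eq_zero_iff.mpr h0
  set y' : V → ℝ := fun v => if h : v = i then 0 else y ⟨v, h⟩ with hy'
  have hcoe : (fun w : {j : V // j ≠ i} => y' w.1) = y := by
    funext w
    simp only [hy', dif_neg w.2]
  have hyi : y' i = 0 := by simp [hy']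
  have hedge : ∀ x : {j : V // j ≠ i}, y' (f x).1.1 = y' (f x).1.2 := by
    intro x
    have := vecMul_apply_eq i y' hyi f x
    rw [hcoe, hvm] at this
    exact (sub_eq_zero.mp this.symm)
  have hs : ∀ e ∈ univ.image f, y' e.1.1 = y' e.1.2 := by
    intro e he
    obtain ⟨x, _, rfl⟩ := Finset.mem_image.mp he
    exact hedge x
  have hzero : ∀ v, y' v = 0 := by
    intro v
    obtain ⟨p⟩ := hconn.preconnected v i
    rw [walk_eq (esub_edge_eq hs) p, hyi]
  apply hy
  funext w
  rw [← hcoe]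
  exact hzero w.1

open scoped Classical in
lemma det_eq_zero_of_not_connected (f : {j : V // j ≠ i} → KE G)
    (hnc : ¬ ((esub G (univ.image f)).spanningCoe).Connected) :
    ((inc G).submatrix (fun a : {j : V // j ≠ i} => (a : V)) f).det = 0 := by
  set s := univ.image f with hsdef
  rw [← Matrix.exists_vecMul_eq_zero_iff]
  have hex : ∃ v, ¬ (esub G s).spanningCoe.Reachable v i := by
    by_contra hall
    push_neg at hall
    haveI : Nonempty V := ⟨i⟩
    exact hnc ⟨fun u v => (hall u).trans (hall v).symm⟩
  obtain ⟨v₀, hv₀⟩ := hex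
  set y' : V → ℝ := fun v => if (esub G s).spanningCoe.Reachable v i then 0 else 1 with hy'
  have hyi : y' i = 0 := by
    simp only [hy', if_pos (Reachable.refl (G := (esub G s).spanningCoe) i)]
  refine ⟨fun w => y' w.1, ?_, ?_⟩
  · intro hc
    have hvi : v₀ ≠ i := by
      intro h
      exact hv₀ (h ▸ Reachable.refl (G := (esub G s).spanningCoe) i)
    have := congrFun hc ⟨v₀, hvi⟩
    simp only [hy', if_neg hv₀, Pi.zero_apply] at this
    exact one_ne_zero this
  · funext x
    rw [Pi.zero_apply, vecMul_apply_eq i y' hyi f x]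
    have hadj2 : (esub G s).spanningCoe.Adj (f x).1.1 (f x).1.2 := by
      rw [Subgraph.spanningCoe_adj]
      exact ⟨f x, Finset.mem_image_of_mem f (Finset.mem_univ x), Or.inl rfl⟩
    have : (esub G s).spanningCoe.Reachable (f x).1.1 i
        ↔ (esub G s).spanningCoe.Reachable (f x).1.2 i :=
      ⟨fun h => (hadj2.symm.reachable).trans h, fun h => (hadj2.reachable).trans h⟩
    by_cases hr : (esub G s).spanningCoe.Reachable (f x).1.1 i
    · simp only [hy', if_pos hr, if_pos (this.mp hr)]
      ring
    · simp only [hy', if_neg hr, if_neg (fun h => hr (this.mpr h))]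
      ring

end kernel2


section flow

def dirvec (a b : V) : KE G → ℝ := fun e =>
  if e.1 = (a, b) then 1 else if e.1 = (b, a) then -1 else 0

noncomputable def flow {u v : V} (p : G.Walk u v) : KE G → ℝ := fun e =>
  (p.darts.map (fun d => dirvec d.toProd.1 d.toProd.2 e)).sum

lemma flow_nil {u : V} (e : KE G) : flow (Walk.nil : G.Walk u u) e = 0 := by
  simp [flow]

lemma flow_cons {u b v : V} (h : G.Adj u b) (q : G.Walk b v) (e : KE G) :
    flow (Walk.cons h q) e = dirvec u b e + flow q e := by
  simp [flow, Walk.darts_cons]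

lemma exists_ke {a b : V} (h : G.Adj a b) :
    ∃ e : KE G, e.1 = (a, b) ∨ e.1 = (b, a) := by
  have hord : ord a ≠ ord b := fun hh => h.ne (ord_injective hh)
  by_cases hlt : ord a < ord b
  · exact ⟨⟨(a, b), h, hlt⟩, Or.inl rfl⟩
  · exact ⟨⟨(b, a), h.symm, lt_of_le_of_ne (not_lt.mp hlt) (Ne.symm hord)⟩, Or.inr rfl⟩

lemma dirvec_pair {a b : V} (h : G.Adj a b) (v : V) :
    ∑ e : KE G, inc G v e * dirvec a b e
      = (if v = a then (1:ℝ) else 0) - (if v = b then 1 else 0) := by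
  have hord : ord a ≠ ord b := fun hh => h.ne (ord_injective hh)
  set e₀ : KE G := if hlt : ord a < ord b then ⟨(a, b), h, hlt⟩
    else ⟨(b, a), h.symm, lt_of_le_of_ne (not_lt.mp hlt) (Ne.symm hord)⟩ with he₀
  rw [Finset.sum_eq_single e₀]
  · by_cases hlt : ord a < ord b
    · rw [he₀, dif_pos hlt]
      have h1 : dirvec a b (⟨(a, b), h, hlt⟩ : KE G) = 1 := by simp [dirvec]
      rw [h1, mul_one, inc_eq_sub]
    · rw [he₀, dif_neg hlt]
      have h1 : dirvec a b (⟨(b, a), h.symm,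
          lt_of_le_of_ne (not_lt.mp hlt) (Ne.symm hord)⟩ : KE G) = -1 := by
        have : (b, a) ≠ (a, b) := fun hh => h.ne' (congrArg Prod.fst hh)
        simp [dirvec, this]
      rw [h1, inc_eq_sub]
      ring
  · intro e _ hne
    have hd : dirvec a b e = 0 := by
      unfold dirvec
      split_ifs with h1 h2
      · exfalso
        apply hne
        have hlt : ord a < ord b := by
          have := e.2.2; rw [h1] at this; exact this
        rw [he₀, dif_pos hlt]
        exact Subtype.ext h1
      · exfalso
        apply hne
        have hlt : ¬ ord a < ord b := by
          have := e.2.2; rw [h2] at this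
          exact not_lt.mpr (le_of_lt this)
        rw [he₀, dif_neg hlt]
        exact Subtype.ext h2
      · rfl
    rw [hd, mul_zero]
  · intro h; exact absurd (Finset.mem_univ e₀) h

lemma flow_pair {u v' : V} (p : G.Walk u v') (v : V) :
    ∑ e : KE G, inc G v e * flow p e
      = (if v = u then (1:ℝ) else 0) - (if v = v' then 1 else 0) := by
  induction p with
  | nil => simp [flow_nil]
  | @cons u b v' h q ih =>
    have : ∀ e : KE G, inc G v e * flow (Walk.cons h q) e
        = inc G v e * dirvec u b e + inc G v e * flow q e := by
      intro e; rw [flow_cons, mul_add]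
    rw [Finset.sum_congr rfl (fun e _ => this e), Finset.sum_add_distrib,
      dirvec_pair h v, ih]
    ring

lemma flow_support {u v' : V} (p : G.Walk u v') (e : KE G)
    (h : s(e.1.1, e.1.2) ∉ p.edges) : flow p e = 0 := by
  apply List.sum_eq_zero
  intro x hx
  obtain ⟨d, hd, rfl⟩ := List.mem_map.mp hx
  have hde : d.edge ∈ p.edges := List.mem_map_of_mem hd
  unfold dirvec
  split_ifs with h1 h2
  · exfalso
    apply h
    have : s(e.1.1, e.1.2) = d.edge := congrArg (fun p : V × V => s(p.1, p.2)) h1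
    rw [this]; exact hde
  · exfalso
    apply h
    have : s(e.1.1, e.1.2) = d.edge := (congrArg (fun p : V × V => s(p.1, p.2)) h2).trans Sym2.eq_swap
    rw [this]; exact hde
  · rfl

lemma exists_flow_ne {u : V} (p : G.Walk u u) (hnodup : p.edges.Nodup)
    (hnil : p.edges ≠ []) :
    ∃ e₀ : KE G, flow p e₀ ≠ 0 ∧ s(e₀.1.1, e₀.1.2) ∈ p.edges := by
  cases p with
  | nil => simp at hnil
  | @cons u b _ h q =>
    obtain ⟨e₀, he⟩ := exists_ke h
    have hmem : s(e₀.1.1, e₀.1.2) ∈ (Walk.cons h q).edges := by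
      rw [Walk.edges_cons]
      rcases he with h1 | h1
      · have : s(e₀.1.1, e₀.1.2) = s(u, b) := congrArg (fun p : V × V => s(p.1, p.2)) h1
        rw [this]; exact List.mem_cons_self
      · have : s(e₀.1.1, e₀.1.2) = s(u, b) := (congrArg (fun p : V × V => s(p.1, p.2)) h1).trans Sym2.eq_swap
        rw [this]; exact List.mem_cons_self
    refine ⟨e₀, ?_, hmem⟩
    have hq0 : flow q e₀ = 0 := by
      apply flow_support
      intro hcon
      rw [Walk.edges_cons] at hnodup
      have h1 := (List.nodup_cons.mp hnodup).1
      rcases he with h2 | h2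
      · apply h1
        have : s(e₀.1.1, e₀.1.2) = s(u, b) := congrArg (fun p : V × V => s(p.1, p.2)) h2
        rwa [this] at hcon
      · apply h1
        have : s(e₀.1.1, e₀.1.2) = s(u, b) := (congrArg (fun p : V × V => s(p.1, p.2)) h2).trans Sym2.eq_swap
        rwa [this] at hcon
    rw [flow_cons, hq0, add_zero]
    rcases he with h1 | h1
    · have : dirvec u b e₀ = 1 := by simp [dirvec, h1]
      rw [this]; norm_num
    · have : dirvec u b e₀ = -1 := by
        have hne : (b, u) ≠ (u, b) := fun hh => h.ne' (congrArg Prod.fst hh)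
        simp [dirvec, h1, hne]
      rw [this]; norm_num

end flow

section cyclezero

variable (i : V)

lemma det_eq_zero_of_cycle (f : {j : V // j ≠ i} → KE G)
    {v : V} (c : ((esub G (univ.image f)).spanningCoe).Walk v v) (hc : c.IsCycle) :
    ((inc G).submatrix (fun a : {j : V // j ≠ i} => (a : V)) f).det = 0 := by
  by_cases hf : Function.Injective f
  case neg =>
    rw [Function.not_injective_iff] at hf
    obtain ⟨x, y, hxy, hne⟩ := hf
    exact Matrix.det_zero_of_column_eq hne (fun k => by
      simp [Matrix.submatrix_apply, hxy])
  have hsub : ∀ e ∈ c.edges, e ∈ G.edgeSet := by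
    intro e he
    have h1 : e ∈ (esub G (univ.image f)).spanningCoe.edgeSet := c.edges_subset_edgeSet he
    exact (SimpleGraph.edgeSet_mono (Subgraph.spanningCoe_le (esub G (univ.image f)))) h1
  set p : G.Walk v v := c.transfer G hsub with hp
  have hpe : p.edges = c.edges := c.edges_transfer hsub
  have hnodup : p.edges.Nodup := by rw [hpe]; exact hc.isTrail.edges_nodup
  have hnenil : p.edges ≠ [] := by
    rw [hpe]
    cases c with
    | nil => exact absurd rfl hc.ne_nil
    | cons h q => simp [Walk.edges_cons]
  -- edges of p only use edges in the image of f
  have himg : ∀ e : KE G, s(e.1.1, e.1.2) ∈ p.edges → e ∈ (univ.image f) := by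
    intro e he
    rw [hpe] at he
    have hadj : (esub G (univ.image f)).spanningCoe.Adj e.1.1 e.1.2 := c.adj_of_mem_edges he
    rw [Subgraph.spanningCoe_adj] at hadj
    exact esub_mem_of_edge hadj
  rw [← Matrix.exists_mulVec_eq_zero_iff]
  refine ⟨fun w => flow p (f w), ?_, ?_⟩
  · obtain ⟨e₀, hfl, hmem⟩ := exists_flow_ne p hnodup hnenil
    have he₀ : e₀ ∈ (univ.image f) := himg e₀ hmem
    obtain ⟨w₀, _, hw₀⟩ := Finset.mem_image.mp he₀
    intro hzero
    have := congrFun hzero w₀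
    rw [hw₀] at this
    exact hfl this
  · funext r
    rw [Pi.zero_apply, Matrix.mulVec, dotProduct]
    have h1 : ∀ w : {j : V // j ≠ i},
        ((inc G).submatrix (fun a : {j : V // j ≠ i} => (a : V)) f) r w
          * flow p (f w) = inc G r.1 (f w) * flow p (f w) := fun w => rfl
    rw [Finset.sum_congr rfl (fun w _ => h1 w)]
    have h2 : ∑ w : {j : V // j ≠ i}, inc G r.1 (f w) * flow p (f w)
        = ∑ e ∈ (univ.image f), inc G r.1 e * flow p e := by
      rw [Finset.sum_image (fun a _ b _ h => hf h)]
    have h3 : ∑ e ∈ (univ.image f), inc G r.1 e * flow p e = ∑ e : KE G, inc G r.1 e * flow p e := by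
      apply Finset.sum_subset (Finset.subset_univ _)
      intro e _ hns
      have : flow p e = 0 := by
        apply flow_support
        intro hcon
        exact hns (himg e hcon)
      rw [this, mul_zero]
    rw [h2, h3, flow_pair p r.1]
    simp

end cyclezero

section detsq

open scoped Classical

variable (i : V)

/-- TU, subtype-index form -/
lemma inc_tu' (f : {j : V // j ≠ i} → KE G) :
    ((inc G).submatrix (fun a : {j : V // j ≠ i} => (a : V)) f).det = 0 ∨
    ((inc G).submatrix (fun a : {j : V // j ≠ i} => (a : V)) f).det = 1 ∨
    ((inc G).submatrix (fun a : {j : V // j ≠ i} => (a : V)) f).det = -1 := by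
  have e := (Fintype.equivFin {j : V // j ≠ i}).symm
  have h1 : ((inc G).submatrix (fun a : {j : V // j ≠ i} => (a : V)) f).det
      = ((inc G).submatrix ((fun a : {j : V // j ≠ i} => (a : V)) ∘ e) (f ∘ e)).det := by
    rw [← Matrix.submatrix_submatrix, Matrix.det_submatrix_equiv_self]
  rw [h1]
  exact inc_tu _ _ _ (Subtype.val_injective.comp e.injective)

lemma det_sq (f : {j : V // j ≠ i} → KE G) :
    ((inc G).submatrix (fun a : {j : V // j ≠ i} => (a : V)) f).det
        * ((inc G).submatrix (fun a : {j : V // j ≠ i} => (a : V)) f).det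
      = if ((esub G (univ.image f)).spanningCoe).IsTree then 1 else 0 := by
  by_cases ht : ((esub G (univ.image f)).spanningCoe).IsTree
  · rw [if_pos ht]
    have hne := det_ne_zero_of_connected i f ht.isConnected
    rcases inc_tu' i f with h | h | h
    · exact absurd h hne
    · rw [h]; norm_num
    · rw [h]; norm_num
  · rw [if_neg ht]
    rw [isTree_iff] at ht
    by_cases hconn : ((esub G (univ.image f)).spanningCoe).Connected
    · have hnac : ¬ ((esub G (univ.image f)).spanningCoe).IsAcyclic := fun h => ht ⟨hconn, h⟩
      unfold SimpleGraph.IsAcyclic at hnac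
      push_neg at hnac
      obtain ⟨v, c, hc⟩ := hnac
      rw [det_eq_zero_of_cycle i f c hc, mul_zero]
    · rw [det_eq_zero_of_not_connected i f hconn, mul_zero]

end detsq

section counting

open scoped Classical

variable (i : V)

lemma finite_subgraph : Finite G.Subgraph := by
  apply Finite.of_injective (fun H : G.Subgraph => (H.verts, H.Adj))
  intro H H' h
  exact SimpleGraph.Subgraph.ext (congrArg Prod.fst h) (congrArg Prod.snd h)

/-- the Finset of directed edges of a subgraph -/
noncomputable def DH (H : G.Subgraph) : Finset (KE G) :=
  univ.filter (fun e : KE G => H.Adj e.1.1 e.1.2)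

lemma card_DH (H : G.Subgraph) (hsp : H.IsSpanning) (ht : H.spanningCoe.IsTree) :
    (DH H).card + 1 = Fintype.card V := by
  have hcard := ht.card_edgeFinset
  rw [← hcard]
  congr 1
  apply Finset.card_bij (fun (e : KE G) _ => s(e.1.1, e.1.2))
  · intro e he
    rw [SimpleGraph.mem_edgeFinset, SimpleGraph.mem_edgeSet, Subgraph.spanningCoe_adj]
    exact (Finset.mem_filter.mp he).2
  · intro e he e' he' hee
    rw [Sym2.eq_iff] at hee
    rcases hee with ⟨h1, h2⟩ | ⟨h1, h2⟩
    · exact Subtype.ext (Prod.ext_iff.mpr ⟨h1, h2⟩)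
    · exfalso
      have ho1 := e.2.2
      have ho2 := e'.2.2
      rw [h1, h2] at ho1
      exact absurd ho2 (not_lt.mpr (le_of_lt ho1))
  · intro t ht'
    rw [SimpleGraph.mem_edgeFinset] at ht'
    induction t with
    | _ u v =>
      rw [SimpleGraph.mem_edgeSet, Subgraph.spanningCoe_adj] at ht'
      obtain ⟨e, he⟩ := exists_ke (H.adj_sub ht')
      refine ⟨e, Finset.mem_filter.mpr ⟨Finset.mem_univ _, ?_⟩, ?_⟩
      · rcases he with h | h
        · have h1 : e.1.1 = u := congrArg Prod.fst h
          have h2 : e.1.2 = v := congrArg Prod.snd h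
          rw [h1, h2]; exact ht'
        · have h1 : e.1.1 = v := congrArg Prod.fst h
          have h2 : e.1.2 = u := congrArg Prod.snd h
          rw [h1, h2]; exact ht'.symm
      · rcases he with h | h
        · exact congrArg (fun p : V × V => s(p.1, p.2)) h
        · exact (congrArg (fun p : V × V => s(p.1, p.2)) h).trans Sym2.eq_swap

lemma card_W : Fintype.card {j : V // j ≠ i} = Fintype.card V - 1 := by
  have := Fintype.card_subtype_compl (fun j : V => j = i)
  simp only [Fintype.card_subtype_eq] at this
  exact this

lemma adj_of_esub_eq {H : G.Subgraph} {f : {j : V // j ≠ i} ↪ KE G}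
    (hf : esub G (univ.image ⇑f) = H) (w : {j : V // j ≠ i}) :
    H.Adj (f w).1.1 (f w).1.2 := by
  rw [← hf]
  exact ⟨f w, Finset.mem_image_of_mem _ (Finset.mem_univ w), Or.inl rfl⟩

/-- number of embeddings realizing a fixed spanning tree -/
lemma card_fiber (H : G.Subgraph) (hsp : H.IsSpanning) (ht : H.spanningCoe.IsTree) :
    Fintype.card {f : {j : V // j ≠ i} ↪ KE G // esub G (univ.image ⇑f) = H}
      = (Fintype.card {j : V // j ≠ i}).factorial := by
  have hcardEH : Fintype.card {e : KE G // H.Adj e.1.1 e.1.2}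
      = Fintype.card {j : V // j ≠ i} := by
    have h1 : Fintype.card {e : KE G // H.Adj e.1.1 e.1.2} = (DH H).card := by
      rw [Fintype.card_subtype]
      rfl
    have h2 := card_DH H hsp ht
    have h3 := card_W i
    have hpos : 1 ≤ Fintype.card V := by
      have : Nonempty V := ⟨i⟩
      exact Fintype.card_pos
    omega
  have hequiv : {f : {j : V // j ≠ i} ↪ KE G // esub G (univ.image ⇑f) = H}
      ≃ ({j : V // j ≠ i} ≃ {e : KE G // H.Adj e.1.1 e.1.2}) :=
    { toFun := fun fp => Equiv.ofBijective
        (fun w => (⟨fp.1 w, adj_of_esub_eq i fp.2 w⟩ : {e : KE G // H.Adj e.1.1 e.1.2}))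
        ⟨fun a b hab => fp.1.injective (congrArg Subtype.val hab), by
          rintro ⟨e, hadj⟩
          have h1 : (esub G (univ.image ⇑fp.1)).Adj e.1.1 e.1.2 := by
            rw [fp.2]; exact hadj
          obtain ⟨w, _, hw⟩ := Finset.mem_image.mp (esub_mem_of_edge h1)
          exact ⟨w, Subtype.ext hw⟩⟩
      invFun := fun σ => ⟨⟨fun w => (σ w).1, Subtype.val_injective.comp σ.injective⟩, by
        apply SimpleGraph.Subgraph.ext
        · rw [Subgraph.isSpanning_iff.mp hsp]; rfl
        · funext u v
          apply propext
          constructor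
          · rintro ⟨e, he, h | h⟩ <;>
            · obtain ⟨w, _, hw⟩ := Finset.mem_image.mp he
              have h2 := (σ w).2
              have hwe : ((σ w : {e : KE G // H.Adj e.1.1 e.1.2}) : KE G) = e := hw
              rw [hwe] at h2
              have ha : e.1.1 = _ := congrArg Prod.fst h
              have hb : e.1.2 = _ := congrArg Prod.snd h
              rw [ha, hb] at h2
              first | exact h2 | exact h2.symm
          · intro hadj
            obtain ⟨e, he⟩ := exists_ke (H.adj_sub hadj)
            have hH : H.Adj e.1.1 e.1.2 := by
              rcases he with h | h
              · have ha : e.1.1 = u := congrArg Prod.fst h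
                have hb : e.1.2 = v := congrArg Prod.snd h
                rw [ha, hb]; exact hadj
              · have ha : e.1.1 = v := congrArg Prod.fst h
                have hb : e.1.2 = u := congrArg Prod.snd h
                rw [ha, hb]; exact hadj.symm
            obtain ⟨w, hw⟩ := σ.surjective ⟨e, hH⟩
            exact ⟨e, Finset.mem_image.mpr ⟨w, Finset.mem_univ _,
              congrArg Subtype.val hw⟩, he⟩⟩
      left_inv := fun fp => Subtype.ext (Function.Embedding.ext fun w => rfl)
      right_inv := fun σ => Equiv.ext fun w => Subtype.ext rfl }
  rw [Fintype.card_congr hequiv,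
    Fintype.card_equiv (Fintype.equivOfCardEq hcardEH).symm]

lemma count_main :
    Fintype.card {f : {j : V // j ≠ i} ↪ KE G //
        ((esub G (univ.image ⇑f)).spanningCoe).IsTree}
      = (Nat.card {H : G.Subgraph // H.IsSpanning ∧ H.spanningCoe.IsTree})
          * (Fintype.card {j : V // j ≠ i}).factorial := by
  haveI : Finite G.Subgraph := finite_subgraph
  haveI : Fintype {H : G.Subgraph // H.IsSpanning ∧ H.spanningCoe.IsTree} :=
    Fintype.ofFinite _
  rw [Nat.card_eq_fintype_card]
  set T := {H : G.Subgraph // H.IsSpanning ∧ H.spanningCoe.IsTree}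
  set ψ : {f : {j : V // j ≠ i} ↪ KE G //
      ((esub G (univ.image ⇑f)).spanningCoe).IsTree} → T :=
    fun fp => ⟨esub G (univ.image ⇑fp.1), esub_spanning _, fp.2⟩ with hψ
  have h1 := Fintype.card_congr (Equiv.sigmaFiberEquiv ψ).symm
  rw [Fintype.card_sigma] at h1
  have h2 : ∀ H : T, Fintype.card {fp // ψ fp = H}
      = (Fintype.card {j : V // j ≠ i}).factorial := by
    intro H
    have hfib : {fp // ψ fp = H}
        ≃ {f : {j : V // j ≠ i} ↪ KE G // esub G (univ.image ⇑f) = H.1} :=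
      { toFun := fun x => ⟨x.1.1, congrArg Subtype.val x.2⟩
        invFun := fun x => ⟨⟨x.1, by rw [x.2]; exact H.2.2⟩, Subtype.ext x.2⟩
        left_inv := fun x => Subtype.ext (Subtype.ext rfl)
        right_inv := fun x => Subtype.ext rfl }
    rw [Fintype.card_congr hfib]
    exact card_fiber i H.1 H.2.1 H.2.2
  rw [Finset.sum_congr rfl (fun H _ => h2 H), Finset.sum_const, smul_eq_mul,
    Finset.card_univ] at h1
  convert h1 using 3

end counting
end Kirchhoff

open Kirchhoff in
/-- Kirchhoff's Matrix–Tree theorem: for a finite connected graph `G`, the number of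
spanning trees equals the determinant of the Laplacian with row `i` and column `i`
deleted, for every choice of `i` (hence the value is independent of `i`). -/
theorem stmt_14 {V : Type*} [Fintype V] [DecidableEq V] (G : SimpleGraph V)
    [DecidableRel G.Adj] (hG : G.Connected) (i : V) :
    (((G.lapMatrix ℝ).submatrix (fun a : {j : V // j ≠ i} => (a : V))
        (fun a : {j : V // j ≠ i} => (a : V))).det)
      = (Nat.card {H : G.Subgraph // H.IsSpanning ∧ H.spanningCoe.IsTree} : ℝ) := by
  classical
  have hfac : (((Fintype.card {j : V // j ≠ i}).factorial : ℕ) : ℝ) ≠ 0 :=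
    Nat.cast_ne_zero.mpr (Nat.factorial_ne_zero _)
  apply mul_left_cancel₀ hfac
  have h0 : (G.lapMatrix ℝ).submatrix (fun a : {j : V // j ≠ i} => (a : V))
      (fun a : {j : V // j ≠ i} => (a : V))
      = ((inc G).submatrix (fun a : {j : V // j ≠ i} => (a : V)) id)
        * (((inc G)ᵀ).submatrix id (fun a : {j : V // j ≠ i} => (a : V))) := by
    rw [lap_eq]
    exact Matrix.submatrix_mul _ _ _ id _ Function.bijective_id
  rw [h0, cauchy_binet_emb]
  have hterm : ∀ f : {j : V // j ≠ i} ↪ KE G,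
      ((((inc G).submatrix (fun a : {j : V // j ≠ i} => (a : V)) id)).submatrix id ⇑f).det
        * ((((inc G)ᵀ).submatrix id (fun a : {j : V // j ≠ i} => (a : V))).submatrix ⇑f id).det
      = if ((esub G (Finset.univ.image ⇑f)).spanningCoe).IsTree then (1:ℝ) else 0 := by
    intro f
    have e1 : (((inc G).submatrix (fun a : {j : V // j ≠ i} => (a : V)) id)).submatrix id ⇑f
        = (inc G).submatrix (fun a : {j : V // j ≠ i} => (a : V)) ⇑f := by
      rw [Matrix.submatrix_submatrix]; rfl
    have e2 : (((inc G)ᵀ).submatrix id (fun a : {j : V // j ≠ i} => (a : V))).submatrix ⇑f id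
        = ((inc G).submatrix (fun a : {j : V // j ≠ i} => (a : V)) ⇑f)ᵀ := by
      rw [Matrix.submatrix_submatrix, ← Matrix.transpose_submatrix]; rfl
    rw [e1, e2, Matrix.det_transpose, det_sq i ⇑f]
  rw [Finset.sum_congr rfl (fun f _ => hterm f), Finset.sum_boole]
  have hcc : (Finset.univ.filter (fun f : {j : V // j ≠ i} ↪ KE G =>
      ((esub G (Finset.univ.image ⇑f)).spanningCoe).IsTree)).card
      = Fintype.card {f : {j : V // j ≠ i} ↪ KE G //
        ((esub G (Finset.univ.image ⇑f)).spanningCoe).IsTree} := (Fintype.card_subtype _).symm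
  rw [hcc, count_main i]
  push_cast
  ring
end
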